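/- If f ∈ C¹(ℝ) satisfies f(t)=0 for t≤0, f(t)=o(t) as t→0⁺, and t·f'(t) > f(t) for all t>0, then for all t>0 one has t²·f'(t) > t·f(t) > 2F(t) > 0, where F(t) = ∫₀ᵗ f(s) ds. -/

import Mathlib

open Filter MeasureTheory

theorem stmt0 (f : ℝ → ℝ) (hf : ContDiff ℝ 1 f)
    (h0 : ∀ t ≤ (0:ℝ), f t = 0)
    (hsmall : Tendsto (fun t => f t / t) (nhdsWithin 0 (Set.Ioi 0)) (nhds 0))
    (hsup : ∀ t > (0:ℝ), t * deriv f t > f t) :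
    ∀ t > (0:ℝ),
      t ^ 2 * deriv f t > t * f t ∧
      t * f t > 2 * (∫ s in (0:ℝ)..t, f s) ∧
      (∫ s in (0:ℝ)..t, f s) > 0 := by
  have cont : Continuous f := hf.continuous
  have hdiff : Differentiable ℝ f := hf.differentiable one_ne_zero
  -- g = f x / x is strictly increasing on Ioi 0
  have hg : StrictMonoOn (fun x => f x / x) (Set.Ioi 0) := by
    apply strictMonoOn_of_deriv_pos (convex_Ioi 0)
    · exact (cont.continuousOn.div continuousOn_id
        (fun x hx => ne_of_gt hx))
    · intro x hx
      rw [interior_Ioi] at hx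
      have hx0 : x ≠ 0 := ne_of_gt hx
      have hd : HasDerivAt (fun x => f x / x)
          ((deriv f x * x - f x * 1) / x ^ 2) x :=
        (hdiff x).hasDerivAt.div (hasDerivAt_id x) hx0
      rw [hd.deriv]
      have := hsup x hx
      have hnum : 0 < deriv f x * x - f x * 1 := by nlinarith
      positivity
  have hfpos : ∀ t > (0:ℝ), 0 < f t := by
    intro t ht
    have h1 : 0 ≤ f (t/2) / (t/2) := by
      refine le_of_tendsto hsmall ?_
      filter_upwards [Ioo_mem_nhdsGT_of_mem (by constructor <;> simp <;> linarith :
        (0:ℝ) ∈ Set.Ico 0 (t/2))] with s hs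
      exact (hg hs.1 (by simp; linarith) hs.2).le
    have h2 : f (t/2) / (t/2) < f t / t := hg (by simp; linarith) ht (by linarith)
    have : 0 < f t / t := lt_of_le_of_lt h1 h2
    have := mul_pos this ht
    rwa [div_mul_cancel₀ _ (ne_of_gt ht)] at this
  intro t ht
  refine ⟨?_, ?_, ?_⟩
  · have := hsup t ht
    have : t * (t * deriv f t) > t * f t := by
      exact (mul_lt_mul_iff_right₀ ht).mpr this
    nlinarith
  · -- h x = x * f x - 2 * ∫
    set h : ℝ → ℝ := fun x => x * f x - 2 * ∫ s in (0:ℝ)..x, f s with hh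
    have hmono : StrictMonoOn h (Set.Ici 0) := by
      apply strictMonoOn_of_deriv_pos (convex_Ici 0)
      · exact ((continuous_id.mul cont).sub
          ((continuous_const.mul (intervalIntegral.continuous_primitive
            (fun a b => cont.intervalIntegrable a b) 0)))).continuousOn
      · intro x hx
        rw [interior_Ici] at hx
        have hd : HasDerivAt h (1 * f x + x * deriv f x - 2 * f x) x := by
          exact (((hasDerivAt_id x).mul (hdiff x).hasDerivAt).sub
            ((cont.integral_hasStrictDerivAt 0 x).hasDerivAt.const_mul 2))
        rw [hd.deriv]
        have := hsup x hx
        linarith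
    have h0t : h 0 < h t := hmono Set.self_mem_Ici (le_of_lt ht) ht
    have : h 0 = 0 := by simp [hh, h0 0 le_rfl]
    rw [this] at h0t
    simp only [hh] at h0t
    linarith
  · apply intervalIntegral.intervalIntegral_pos_of_pos_on
      (cont.intervalIntegrable 0 t)
      (fun x hx => hfpos x hx.1) ht
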